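/- Let q : [a,b] → ℂ be continuous and f ∈ C²[a,b] a nonvanishing solution of f'' - q f = 0 with f(x) ≠ 0 on [a,b]. Define X^(0) ≡ 1, X^(n)(x) = n ∫_{x₀}^x X^(n-1)(s)(f²(s))^{(-1)ⁿ} ds, X̃^(0) ≡ 1, X̃^(n)(x) = n ∫_{x₀}^x X̃^(n-1)(s)(f²(s))^{(-1)^{n-1}} ds, and φ_k = f·X^(k) for k odd, φ_k = f·X̃^(k) for k even. Then for each λ ∈ ℂ the series u₁ = Σ_{k≥0} λ^k φ_{2k}/(2k)! converges uniformly on [a,b] and u₁ satisfies u₁'' - q u₁ = λ u₁ on (a,b). -/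

import Mathlib

open MeasureTheory Filter Finset

private lemma aux_abs_integral_pow (x₀ x : ℝ) (n : ℕ) :
    |∫ s in x₀..x, |s - x₀| ^ n| = |x - x₀| ^ (n+1) / (n+1) := by
  have h := intervalIntegral.integral_comp_sub_right (a := x₀) (b := x)
    (fun t => |t| ^ n) x₀
  rw [h, sub_self]
  rcases le_or_gt 0 (x - x₀) with hy | hy
  · rw [intervalIntegral.integral_congr (g := fun t => t ^ n)
      (fun t ht => by
        rw [Set.uIcc_of_le hy] at ht
        simp [abs_of_nonneg ht.1]),
      integral_pow]
    rw [zero_pow (by omega), sub_zero, abs_of_nonneg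
        (by positivity), abs_of_nonneg hy]
  · rw [intervalIntegral.integral_congr (g := fun t => (-t) ^ n)
      (fun t ht => by
        rw [Set.uIcc_of_ge hy.le] at ht
        rw [abs_of_nonpos ht.2]),
      show (fun t : ℝ => (-t)^n) = fun t : ℝ => (fun u : ℝ => u ^ n) (-t) from rfl,
      intervalIntegral.integral_comp_neg (fun u : ℝ => u ^ n), integral_pow]
    rw [neg_zero, zero_pow (by omega), abs_of_nonpos hy.le]
    rw [abs_div, zero_sub, abs_neg, abs_pow, abs_of_nonneg (by linarith),
      abs_of_nonneg (by positivity)]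

private lemma aux_nat_le (k : ℕ) : ((2*k+1 : ℕ) : ℝ) ≤ 2 * 4 ^ k ∧
    ((2*k:ℕ):ℝ) * (((2*k:ℕ):ℝ) + 1) ≤ 6 * 4 ^ k := by
  have h : (k : ℝ) + 1 ≤ 2 ^ k := by
    have := Nat.lt_two_pow_self (n := k)
    exact_mod_cast this
  have h2 : (0:ℝ) ≤ (k:ℝ) := Nat.cast_nonneg k
  have h4 : ((4:ℝ)) ^ k = 2^k * 2^k := by
    rw [← pow_add, show k + k = 2*k by ring, pow_mul]; norm_num
  have h5 : (1:ℝ) ≤ 2^k := one_le_pow₀ (by norm_num)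
  constructor
  · push_cast; nlinarith [sq_nonneg ((2:ℝ)^k - 1)]
  · push_cast; nlinarith [sq_nonneg ((2:ℝ)^k - 1)]

private lemma aux_summable (C t : ℝ) :
    Summable (fun k : ℕ => C * (t ^ (2*k) / ((2*k).factorial : ℝ))) := by
  have h1 : Summable (fun n : ℕ => t ^ n / (n.factorial : ℝ)) :=
    Real.summable_pow_div_factorial t
  have h2 : Summable (fun k : ℕ => t ^ (2*k) / (((2*k).factorial : ℕ) : ℝ)) :=
    h1.comp_injective (fun a b hab => by omega)
  exact h2.mul_left C

/-- Primitive of a continuous function on `[a,b]`: continuity and a power bound. -/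
private lemma aux_prim (a b x₀ : ℝ) (hab : a ≤ b) (hx₀ : x₀ ∈ Set.Icc a b)
    {g : ℝ → ℂ} (hg : ContinuousOn g (Set.Icc a b)) {K : ℝ} (hK : 0 ≤ K) (n : ℕ)
    (hb : ∀ s ∈ Set.Icc a b, ‖g s‖ ≤ K * |s - x₀| ^ n) :
    ContinuousOn (fun x => ∫ s in x₀..x, g s) (Set.Icc a b) ∧
    ∀ x ∈ Set.Icc a b, ‖∫ s in x₀..x, g s‖ ≤ K * (|x - x₀| ^ (n+1) / (n+1)) := by
  have huIcc : Set.uIcc a b = Set.Icc a b := Set.uIcc_of_le hab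
  have hsub : ∀ x ∈ Set.Icc a b, Set.uIcc x₀ x ⊆ Set.Icc a b := fun x hx =>
    Set.uIcc_subset_Icc hx₀ hx
  constructor
  · have hint : IntervalIntegrable g volume a b := by
      apply ContinuousOn.intervalIntegrable
      rwa [huIcc]
    have := intervalIntegral.continuousOn_primitive_interval' hint
      (by rw [huIcc]; exact hx₀)
    rwa [huIcc] at this
  · intro x hx
    have hx₀x : Set.uIoc x₀ x ⊆ Set.Icc a b := fun t ht =>
      hsub x hx (Set.Ioc_subset_Icc_self ht)
    have hae : ∀ᵐ t ∂(volume.restrict (Set.uIoc x₀ x)),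
        ‖g t‖ ≤ K * |t - x₀| ^ n := by
      filter_upwards [ae_restrict_mem measurableSet_uIoc] with t ht
      exact hb t (hx₀x ht)
    have hbint : IntervalIntegrable (fun t => K * |t - x₀| ^ n) volume x₀ x := by
      apply Continuous.intervalIntegrable
      continuity
    have h1 := intervalIntegral.norm_integral_le_abs_of_norm_le hae hbint
    rw [intervalIntegral.integral_const_mul, abs_mul, abs_of_nonneg hK,
      aux_abs_integral_pow] at h1
    exact h1

theorem stmt3
    (a b x₀ : ℝ) (hab : a < b) (hx₀ : x₀ ∈ Set.Icc a b)
    (q f f' f'' : ℝ → ℂ)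
    (hq : ContinuousOn q (Set.Icc a b))
    (hf1 : ∀ x ∈ Set.Icc a b, HasDerivAt f (f' x) x)
    (hf2 : ∀ x ∈ Set.Icc a b, HasDerivAt f' (f'' x) x)
    (hode : ∀ x ∈ Set.Icc a b, f'' x = q x * f x)
    (hfne : ∀ x ∈ Set.Icc a b, f x ≠ 0)
    (X Xt : ℕ → ℝ → ℂ)
    (hX0 : ∀ x, X 0 x = 1) (hXt0 : ∀ x, Xt 0 x = 1)
    (hXrec : ∀ n x, X (n + 1) x
      = (n + 1 : ℂ) * ∫ s in x₀..x, X n s * ((f s) ^ 2) ^ ((-1 : ℤ) ^ (n + 1)))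
    (hXtrec : ∀ n x, Xt (n + 1) x
      = (n + 1 : ℂ) * ∫ s in x₀..x, Xt n s * ((f s) ^ 2) ^ ((-1 : ℤ) ^ n))
    (φ : ℕ → ℝ → ℂ)
    (hφ : ∀ k x, φ k x = if Odd k then f x * X k x else f x * Xt k x)
    (lam : ℂ)
    (u₁ : ℝ → ℂ)
    (hu₁ : ∀ x, u₁ x = ∑' k : ℕ, lam ^ k / ((2 * k).factorial : ℂ) * φ (2 * k) x) :
    TendstoUniformlyOn
      (fun N x => ∑ k ∈ range N, lam ^ k / ((2 * k).factorial : ℂ) * φ (2 * k) x)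
      u₁ atTop (Set.Icc a b)
    ∧ ∀ x ∈ Set.Ioo a b, deriv (deriv u₁) x - q x * u₁ x = lam * u₁ x := by
  have hab' : a ≤ b := hab.le
  have hIoo : Set.Ioo a b ⊆ Set.Icc a b := Set.Ioo_subset_Icc_self
  have hfc : ContinuousOn f (Set.Icc a b) := fun x hx =>
    (hf1 x hx).continuousAt.continuousWithinAt
  have hf'c : ContinuousOn f' (Set.Icc a b) := fun x hx =>
    (hf2 x hx).continuousAt.continuousWithinAt
  have hgc : ∀ e : ℤ, ContinuousOn (fun s => ((f s)^2) ^ e) (Set.Icc a b) := fun e =>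
    (hfc.pow 2).zpow₀ e (fun x hx => Or.inl (pow_ne_zero 2 (hfne x hx)))
  -- the bound M on the weights
  obtain ⟨M, hM1, hMb⟩ : ∃ M : ℝ, 1 ≤ M ∧ ∀ (n : ℕ), ∀ x ∈ Set.Icc a b,
      ‖((f x)^2 : ℂ) ^ ((-1:ℤ)^n)‖ ≤ M := by
    obtain ⟨C1, hC1⟩ := (isCompact_Icc (a := a) (b := b)).exists_bound_of_continuousOn (hgc 1)
    obtain ⟨C2, hC2⟩ := (isCompact_Icc (a := a) (b := b)).exists_bound_of_continuousOn (hgc (-1))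
    refine ⟨max 1 (max C1 C2), le_max_left _ _, ?_⟩
    intro n x hx
    rcases Nat.even_or_odd n with he | ho
    · rw [show ((-1:ℤ))^n = 1 from he.neg_one_pow]
      exact le_trans (hC1 x hx) (le_trans (le_max_left _ _) (le_max_right _ _))
    · rw [show ((-1:ℤ))^n = -1 from ho.neg_one_pow]
      exact le_trans (hC2 x hx) (le_trans (le_max_right _ _) (le_max_right _ _))
  have hM0 : (0:ℝ) ≤ M := le_trans zero_le_one hM1
  -- continuity and bounds for X n, Xt n, by induction
  have key : ∀ n : ℕ,
      (ContinuousOn (X n) (Set.Icc a b) ∧ ContinuousOn (Xt n) (Set.Icc a b)) ∧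
      (∀ x ∈ Set.Icc a b, ‖X n x‖ ≤ M^n * |x - x₀|^n ∧ ‖Xt n x‖ ≤ M^n * |x - x₀|^n) := by
    intro n
    induction n with
    | zero =>
      have e1 : X 0 = fun _ => (1:ℂ) := funext hX0
      have e2 : Xt 0 = fun _ => (1:ℂ) := funext hXt0
      refine ⟨⟨by rw [e1]; exact continuousOn_const, by rw [e2]; exact continuousOn_const⟩, ?_⟩
      intro x hx
      simp [hX0, hXt0]
    | succ n ih =>
      obtain ⟨⟨ihXc, ihXtc⟩, ihb⟩ := ih
      -- treat X
      have hstep : ∀ (Y : ℕ → ℝ → ℂ) (e : ℤ),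
          (∀ x, Y (n+1) x = (n + 1 : ℂ) * ∫ s in x₀..x, Y n s * ((f s) ^ 2) ^ e) →
          ContinuousOn (Y n) (Set.Icc a b) →
          (∀ x ∈ Set.Icc a b, ‖Y n x‖ ≤ M^n * |x - x₀|^n) →
          (∀ s ∈ Set.Icc a b, ‖((f s)^2 : ℂ) ^ e‖ ≤ M) →
          ContinuousOn (Y (n+1)) (Set.Icc a b) ∧
          ∀ x ∈ Set.Icc a b, ‖Y (n+1) x‖ ≤ M^(n+1) * |x - x₀|^(n+1) := by
        intro Y e hrec hYc hYb hMe
        have hgc' : ContinuousOn (fun s => Y n s * ((f s)^2) ^ e) (Set.Icc a b) :=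
          hYc.mul (hgc e)
        have hgb : ∀ s ∈ Set.Icc a b,
            ‖Y n s * ((f s)^2) ^ e‖ ≤ M^(n+1) * |s - x₀|^n := by
          intro s hs
          rw [norm_mul, pow_succ]
          calc ‖Y n s‖ * ‖((f s)^2 : ℂ) ^ e‖
              ≤ (M^n * |s - x₀|^n) * M :=
                mul_le_mul (hYb s hs) (hMe s hs) (norm_nonneg _)
                  (by positivity)
            _ = M^n * M * |s - x₀|^n := by ring
        obtain ⟨hc, hbd⟩ := aux_prim a b x₀ hab' hx₀ hgc' (by positivity) n hgb
        have heq : Y (n+1) = fun x => (n + 1 : ℂ) * ∫ s in x₀..x, Y n s * ((f s)^2) ^ e :=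
          funext hrec
        constructor
        · rw [heq]; exact continuousOn_const.mul hc
        · intro x hx
          rw [hrec x, norm_mul]
          have hn : ‖(n + 1 : ℂ)‖ = (n:ℝ) + 1 := by
            have : ((n:ℂ) + 1) = ((n+1 : ℕ) : ℂ) := by push_cast; ring
            rw [this, Complex.norm_natCast]; push_cast; ring
          rw [hn]
          calc ((n:ℝ)+1) * ‖∫ s in x₀..x, Y n s * ((f s)^2) ^ e‖
              ≤ ((n:ℝ)+1) * (M^(n+1) * (|x - x₀|^(n+1) / ((n:ℝ)+1))) := by
                refine mul_le_mul_of_nonneg_left ?_ (by positivity)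
                have := hbd x hx
                simpa using this
            _ = M^(n+1) * |x - x₀|^(n+1) := by
                field_simp
      have hX := hstep X ((-1:ℤ)^(n+1)) (hXrec n) ihXc
        (fun x hx => (ihb x hx).1) (hMb (n+1))
      have hXt := hstep Xt ((-1:ℤ)^n) (hXtrec n) ihXtc
        (fun x hx => (ihb x hx).2) (hMb n)
      exact ⟨⟨hX.1, hXt.1⟩, fun x hx => ⟨hX.2 x hx, hXt.2 x hx⟩⟩
  -- global bound R'
  set R' : ℝ := max (M * (b - a)) 1 with hR'def
  have hR'1 : (1:ℝ) ≤ R' := le_max_right _ _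
  have hR'0 : (0:ℝ) ≤ R' := by linarith
  have hXtb : ∀ n, ∀ x ∈ Set.Icc a b, ‖Xt n x‖ ≤ R' ^ n := by
    intro n x hx
    refine le_trans ((key n).2 x hx).2 ?_
    have h1 : |x - x₀| ≤ b - a := by
      rw [abs_sub_le_iff]
      constructor <;> [linarith [hx.1, hx.2, hx₀.1, hx₀.2]; linarith [hx.1, hx.2, hx₀.1, hx₀.2]]
    calc M^n * |x - x₀|^n ≤ M^n * (b-a)^n := by gcongr
      _ = (M*(b-a))^n := (mul_pow _ _ _).symm
      _ ≤ R'^n := pow_le_pow_left₀ (mul_nonneg hM0 (by linarith)) (le_max_left _ _) n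
  -- constants
  have hbd : ∀ g : ℝ → ℂ, ContinuousOn g (Set.Icc a b) →
      ∃ C : ℝ, 0 ≤ C ∧ ∀ x ∈ Set.Icc a b, ‖g x‖ ≤ C := by
    intro g hg
    obtain ⟨C, hC⟩ := (isCompact_Icc (a := a) (b := b)).exists_bound_of_continuousOn hg
    exact ⟨max C 0, le_max_right _ _, fun x hx => le_trans (hC x hx) (le_max_left _ _)⟩
  obtain ⟨Cf, hCf0, hCf⟩ := hbd f hfc
  obtain ⟨Cf', hCf'0, hCf'⟩ := hbd f' hf'c
  obtain ⟨Cq, hCq0, hCq⟩ := hbd q hq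
  obtain ⟨Ci, hCi0, hCi⟩ := hbd (fun x => (f x)⁻¹) (hfc.inv₀ hfne)
  set t : ℝ := Real.sqrt ‖lam‖ * R' with htdef
  have ht0 : 0 ≤ t := mul_nonneg (Real.sqrt_nonneg _) hR'0
  have hLk : ∀ k : ℕ, ‖lam‖^k * R'^(2*k) = t^(2*k) := by
    intro k
    rw [htdef, mul_pow, pow_mul (Real.sqrt ‖lam‖) 2 k, Real.sq_sqrt (norm_nonneg lam)]
  have hT : ∀ k : ℕ, (4:ℝ)^k * t^(2*k) = (2*t)^(2*k) := by
    intro k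
    rw [mul_pow (2:ℝ) t (2*k), pow_mul (2:ℝ) 2 k]
    norm_num
  have hck : ∀ k : ℕ, ‖lam ^ k / ((2*k).factorial : ℂ)‖
      = ‖lam‖^k / (((2*k).factorial : ℕ) : ℝ) := by
    intro k
    rw [norm_div, norm_pow, Complex.norm_natCast]
  have hφeven : ∀ k x, φ (2*k) x = f x * Xt (2*k) x := by
    intro k x
    rw [hφ, if_neg (Nat.not_odd_iff_even.mpr (even_two_mul k))]
  -- bound for the series itself
  have B0 : ∀ (k : ℕ) (x : ℝ), x ∈ Set.Icc a b →
      ‖lam ^ k / ((2*k).factorial : ℂ) * φ (2*k) x‖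
        ≤ Cf * (t^(2*k) / (((2*k).factorial : ℕ) : ℝ)) := by
    intro k x hx
    rw [norm_mul, hck, hφeven, norm_mul]
    have hfact : (0:ℝ) < (((2*k).factorial : ℕ) : ℝ) := by
      exact_mod_cast (2*k).factorial_pos
    have h1 : ‖f x‖ * ‖Xt (2*k) x‖ ≤ Cf * R'^(2*k) :=
      mul_le_mul (hCf x hx) (hXtb (2*k) x hx) (norm_nonneg _) hCf0
    calc ‖lam‖^k / (((2*k).factorial : ℕ) : ℝ) * (‖f x‖ * ‖Xt (2*k) x‖)
        ≤ ‖lam‖^k / (((2*k).factorial : ℕ) : ℝ) * (Cf * R'^(2*k)) := by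
          refine mul_le_mul_of_nonneg_left h1 (by positivity)
      _ = Cf * ((‖lam‖^k * R'^(2*k)) / (((2*k).factorial : ℕ) : ℝ)) := by ring
      _ = Cf * (t^(2*k) / (((2*k).factorial : ℕ) : ℝ)) := by rw [hLk]
  have hu₁fun : u₁ = fun x => ∑' k : ℕ, lam ^ k / ((2 * k).factorial : ℂ) * φ (2 * k) x :=
    funext hu₁
  have hTU0 : TendstoUniformlyOn
      (fun N x => ∑ k ∈ range N, lam ^ k / ((2 * k).factorial : ℂ) * φ (2 * k) x)
      u₁ atTop (Set.Icc a b) := by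
    rw [hu₁fun]
    exact tendstoUniformlyOn_tsum_nat (aux_summable Cf t) B0
  refine ⟨hTU0, ?_⟩
  -- derivative of Xt at interior points
  have hXtder : ∀ n, ∀ x ∈ Set.Ioo a b, HasDerivAt (Xt (n+1))
      (((n:ℂ)+1) * (Xt n x * ((f x)^2) ^ ((-1:ℤ)^n))) x := by
    intro n x hx
    have hxI := hIoo hx
    have hgc' : ContinuousOn (fun s => Xt n s * ((f s)^2) ^ ((-1:ℤ)^n)) (Set.Icc a b) :=
      (key n).1.2.mul (hgc _)
    have hnhds : Set.Icc a b ∈ nhds x := Icc_mem_nhds hx.1 hx.2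
    have hint : IntervalIntegrable (fun s => Xt n s * ((f s)^2) ^ ((-1:ℤ)^n)) volume x₀ x :=
      (hgc'.mono (Set.uIcc_subset_Icc hx₀ hxI)).intervalIntegrable
    have hmeas : StronglyMeasurableAtFilter
        (fun s => Xt n s * ((f s)^2) ^ ((-1:ℤ)^n)) (nhds x) volume :=
      ContinuousOn.stronglyMeasurableAtFilter isOpen_Ioo (hgc'.mono hIoo) x hx
    have hca : ContinuousAt (fun s => Xt n s * ((f s)^2) ^ ((-1:ℤ)^n)) x :=
      (hgc' x hxI).continuousAt hnhds
    have hD := HasDerivAt.const_mul ((n:ℂ)+1)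
      (intervalIntegral.integral_hasDerivAt_right hint hmeas hca)
    have heq : Xt (n+1)
        = fun y => ((n:ℂ)+1) * ∫ s in x₀..y, Xt n s * ((f s)^2) ^ ((-1:ℤ)^n) :=
      funext (hXtrec n)
    rw [heq]
    exact hD
  -- the derivative functions
  obtain ⟨P1, hP1⟩ : ∃ P1 : ℕ → ℝ → ℂ, ∀ k x, P1 k x
      = f' x * Xt (2*k) x + ((2*k : ℕ) : ℂ) * (Xt (2*k-1) x * (f x)⁻¹) :=
    ⟨_, fun k x => rfl⟩
  obtain ⟨P2, hP2⟩ : ∃ P2 : ℕ → ℝ → ℂ, ∀ k x, P2 k x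
      = q x * φ (2*k) x + ((2*k : ℕ) : ℂ) * (((2*k : ℕ) : ℂ) - 1) * φ (2*k-2) x :=
    ⟨_, fun k x => rfl⟩
  -- first derivative of φ (2k)
  have hder1 : ∀ k, ∀ x ∈ Set.Ioo a b, HasDerivAt (φ (2*k)) (P1 k x) x := by
    intro k x hx
    have hxI := hIoo hx
    have hφf : φ (2*k) = fun y => f y * Xt (2*k) y := funext fun y => hφeven k y
    rw [hφf, hP1]
    cases k with
    | zero =>
      have h1 : (fun y => f y * Xt (2*0) y) = fun y => f y := by
        funext y
        rw [show (2*0 : ℕ) = 0 by norm_num, hXt0, mul_one]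
      rw [h1]
      have h2 : f' x * Xt (2*0) x + ((2*0 : ℕ) : ℂ) * (Xt (2*0-1) x * (f x)⁻¹) = f' x := by
        rw [show (2*0 : ℕ) = 0 by norm_num, hXt0]
        norm_num
      rw [h2]
      exact hf1 x hxI
    | succ j =>
      have e1 : 2*(j+1) = (2*j+1)+1 := by ring
      rw [e1]
      simp only [Nat.add_sub_cancel]
      have hprod := (hf1 x hxI).mul (hXtder (2*j+1) x hx)
      refine hprod.congr_deriv ?_
      have hodd : ((-1:ℤ))^(2*j+1) = -1 := Odd.neg_one_pow ⟨j, by ring⟩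
      rw [hodd, zpow_neg_one]
      have hfx := hfne x hxI
      push_cast
      field_simp
  -- second derivative of φ (2k)
  have hder2 : ∀ k, ∀ x ∈ Set.Ioo a b, HasDerivAt (P1 k) (P2 k x) x := by
    intro k x hx
    have hxI := hIoo hx
    rw [hP2]
    cases k with
    | zero =>
      have h1 : P1 0 = fun y => f' y := by
        funext y
        rw [hP1, show (2*0 : ℕ) = 0 by norm_num, hXt0]
        norm_num
      rw [h1]
      have h2 : q x * φ (2*0) x + ((2*0 : ℕ) : ℂ) * (((2*0 : ℕ) : ℂ) - 1) * φ (2*0-2) x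
          = f'' x := by
        rw [show (2*0 : ℕ) = 0 by norm_num, show (0 : ℕ) - 2 = 0 by omega,
          hφ, if_neg (by norm_num), hXt0, hode x hxI]
        norm_num
      rw [h2]
      exact hf2 x hxI
    | succ j =>
      have e1 : 2*(j+1) = (2*j+1)+1 := by ring
      have e3 : 2*(j+1)-2 = 2*j := by omega
      have hA := (hf2 x hxI).mul (hXtder (2*j+1) x hx)
      have hinv : HasDerivAt (fun y => (f y)⁻¹) (-((f x)^2)⁻¹ * f' x) x := by
        have h := (hasDerivAt_inv (hfne x hxI)).comp x (hf1 x hxI)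
        simpa [Function.comp_def] using h
      have hB := HasDerivAt.const_mul ((2*(j+1) : ℕ) : ℂ)
        ((hXtder (2*j) x hx).mul hinv)
      have h1 : P1 (j+1) = fun y =>
          f' y * Xt ((2*j+1)+1) y + ((2*(j+1) : ℕ) : ℂ) * (Xt (2*j+1) y * (f y)⁻¹) := by
        funext y
        rw [hP1, e1]
        simp only [Nat.add_sub_cancel]
      rw [h1]
      have htot := hA.add hB
      refine htot.congr_deriv ?_
      rw [hφeven, e3, hφeven j x]
      have hodd : ((-1:ℤ))^(2*j+1) = -1 := Odd.neg_one_pow ⟨j, by ring⟩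
      have heven : ((-1:ℤ))^(2*j) = 1 := Even.neg_one_pow ⟨j, by ring⟩
      rw [hodd, heven, zpow_neg_one, zpow_one, e1, hode x hxI]
      have hfx := hfne x hxI
      push_cast
      field_simp
      ring
  -- bound for the first-derivative series
  have B1 : ∀ (k : ℕ) (x : ℝ), x ∈ Set.Icc a b →
      ‖lam ^ k / ((2*k).factorial : ℂ) * P1 k x‖
        ≤ (2*(Cf' + Ci)) * ((2*t)^(2*k) / (((2*k).factorial : ℕ) : ℝ)) := by
    intro k x hx
    have hfact : (0:ℝ) < (((2*k).factorial : ℕ) : ℝ) := by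
      exact_mod_cast (2*k).factorial_pos
    have hXt1 : ‖Xt (2*k-1) x‖ ≤ R'^(2*k) :=
      le_trans (hXtb (2*k-1) x hx) (pow_le_pow_right₀ hR'1 (by omega))
    have hP1b : ‖P1 k x‖ ≤ (((2*k:ℕ):ℝ) + 1) * ((Cf' + Ci) * R'^(2*k)) := by
      rw [hP1]
      calc ‖f' x * Xt (2*k) x + ((2*k : ℕ) : ℂ) * (Xt (2*k-1) x * (f x)⁻¹)‖
          ≤ ‖f' x * Xt (2*k) x‖ + ‖((2*k : ℕ) : ℂ) * (Xt (2*k-1) x * (f x)⁻¹)‖ :=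
            norm_add_le _ _
        _ = ‖f' x‖ * ‖Xt (2*k) x‖ + ((2*k:ℕ):ℝ) * (‖Xt (2*k-1) x‖ * ‖(f x)⁻¹‖) := by
            rw [norm_mul, norm_mul, norm_mul, Complex.norm_natCast]
        _ ≤ Cf' * R'^(2*k) + ((2*k:ℕ):ℝ) * (R'^(2*k) * Ci) := by
            refine add_le_add
              (mul_le_mul (hCf' x hx) (hXtb (2*k) x hx) (norm_nonneg _) hCf'0)
              (mul_le_mul_of_nonneg_left
                (mul_le_mul hXt1 (hCi x hx) (norm_nonneg _) (by positivity))
                (Nat.cast_nonneg _))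
        _ ≤ (((2*k:ℕ):ℝ) + 1) * ((Cf' + Ci) * R'^(2*k)) := by
            have h1 : (0:ℝ) ≤ R'^(2*k) := by positivity
            have h2 : (0:ℝ) ≤ ((2*k:ℕ):ℝ) := Nat.cast_nonneg _
            nlinarith [mul_nonneg (mul_nonneg h2 hCf'0) h1, mul_nonneg hCi0 h1]
    calc ‖lam ^ k / ((2*k).factorial : ℂ) * P1 k x‖
        = ‖lam‖^k / (((2*k).factorial : ℕ) : ℝ) * ‖P1 k x‖ := by rw [norm_mul, hck]
      _ ≤ ‖lam‖^k / (((2*k).factorial : ℕ) : ℝ)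
          * ((((2*k:ℕ):ℝ) + 1) * ((Cf' + Ci) * R'^(2*k))) := by
          exact mul_le_mul_of_nonneg_left hP1b (by positivity)
      _ = (Cf' + Ci) * (((((2*k:ℕ):ℝ)+1) * (‖lam‖^k * R'^(2*k)))
            / (((2*k).factorial : ℕ) : ℝ)) := by ring
      _ = (Cf' + Ci) * (((((2*k:ℕ):ℝ)+1) * t^(2*k)) / (((2*k).factorial : ℕ) : ℝ)) := by
          rw [hLk]
      _ ≤ (Cf' + Ci) * ((2*4^k * t^(2*k)) / (((2*k).factorial : ℕ) : ℝ)) := by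
          have hn := (aux_nat_le k).1
          push_cast at hn ⊢
          gcongr
      _ = (2*(Cf' + Ci)) * ((4^k * t^(2*k)) / (((2*k).factorial : ℕ) : ℝ)) := by ring
      _ = (2*(Cf' + Ci)) * ((2*t)^(2*k) / (((2*k).factorial : ℕ) : ℝ)) := by rw [hT]
  -- bound for the shifted part of the second-derivative series
  have B2b : ∀ (k : ℕ) (x : ℝ), x ∈ Set.Icc a b →
      ‖lam ^ k / ((2*k).factorial : ℂ)
          * (((2*k : ℕ) : ℂ) * (((2*k : ℕ) : ℂ) - 1) * φ (2*k-2) x)‖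
        ≤ (6*Cf) * ((2*t)^(2*k) / (((2*k).factorial : ℕ) : ℝ)) := by
    intro k x hx
    have hfact : (0:ℝ) < (((2*k).factorial : ℕ) : ℝ) := by
      exact_mod_cast (2*k).factorial_pos
    have hφb : ‖φ (2*k-2) x‖ ≤ Cf * R'^(2*k) := by
      have e : 2*k-2 = 2*(k-1) := by omega
      rw [e, hφeven, norm_mul]
      refine mul_le_mul (hCf x hx)
        (le_trans (hXtb (2*(k-1)) x hx) (pow_le_pow_right₀ hR'1 (by omega)))
        (norm_nonneg _) hCf0
    have hcoef : ‖((2*k : ℕ) : ℂ) * (((2*k : ℕ) : ℂ) - 1)‖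
        ≤ ((2*k:ℕ):ℝ) * (((2*k:ℕ):ℝ) + 1) := by
      rw [norm_mul, Complex.norm_natCast]
      refine mul_le_mul_of_nonneg_left ?_ (Nat.cast_nonneg _)
      calc ‖((2*k : ℕ) : ℂ) - 1‖ ≤ ‖((2*k : ℕ) : ℂ)‖ + ‖(1:ℂ)‖ := norm_sub_le _ _
        _ = ((2*k:ℕ):ℝ) + 1 := by rw [Complex.norm_natCast, norm_one]
    calc ‖lam ^ k / ((2*k).factorial : ℂ)
          * (((2*k : ℕ) : ℂ) * (((2*k : ℕ) : ℂ) - 1) * φ (2*k-2) x)‖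
        = ‖lam‖^k / (((2*k).factorial : ℕ) : ℝ)
          * (‖((2*k : ℕ) : ℂ) * (((2*k : ℕ) : ℂ) - 1)‖ * ‖φ (2*k-2) x‖) := by
          rw [norm_mul, hck, norm_mul]
      _ ≤ ‖lam‖^k / (((2*k).factorial : ℕ) : ℝ)
          * ((((2*k:ℕ):ℝ) * (((2*k:ℕ):ℝ) + 1)) * (Cf * R'^(2*k))) := by
          refine mul_le_mul_of_nonneg_left
            (mul_le_mul hcoef hφb (norm_nonneg _) (by positivity)) (by positivity)
      _ = Cf * (((((2*k:ℕ):ℝ) * (((2*k:ℕ):ℝ) + 1)) * (‖lam‖^k * R'^(2*k)))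
            / (((2*k).factorial : ℕ) : ℝ)) := by ring
      _ = Cf * (((((2*k:ℕ):ℝ) * (((2*k:ℕ):ℝ) + 1)) * t^(2*k))
            / (((2*k).factorial : ℕ) : ℝ)) := by rw [hLk]
      _ ≤ Cf * ((6*4^k * t^(2*k)) / (((2*k).factorial : ℕ) : ℝ)) := by
          have hn := (aux_nat_le k).2
          push_cast at hn ⊢
          gcongr
      _ = (6*Cf) * ((4^k * t^(2*k)) / (((2*k).factorial : ℕ) : ℝ)) := by ring
      _ = (6*Cf) * ((2*t)^(2*k) / (((2*k).factorial : ℕ) : ℝ)) := by rw [hT]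
  -- bound for the full second-derivative series
  have B2 : ∀ (k : ℕ) (x : ℝ), x ∈ Set.Icc a b →
      ‖lam ^ k / ((2*k).factorial : ℂ) * P2 k x‖
        ≤ (Cq*Cf + 6*Cf) * ((2*t)^(2*k) / (((2*k).factorial : ℕ) : ℝ)) := by
    intro k x hx
    have hfact : (0:ℝ) < (((2*k).factorial : ℕ) : ℝ) := by
      exact_mod_cast (2*k).factorial_pos
    have ht2 : t^(2*k) ≤ (2*t)^(2*k) := by
      rw [← hT]
      nlinarith [pow_nonneg ht0 (2*k), one_le_pow₀ (show (1:ℝ) ≤ 4 by norm_num) (n := k)]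
    have h1 : ‖q x * (lam ^ k / ((2*k).factorial : ℂ) * φ (2*k) x)‖
        ≤ Cq * (Cf * (t^(2*k) / (((2*k).factorial : ℕ) : ℝ))) := by
      rw [norm_mul]
      exact mul_le_mul (hCq x hx) (B0 k x hx) (norm_nonneg _) hCq0
    have h2 := B2b k x hx
    calc ‖lam ^ k / ((2*k).factorial : ℂ) * P2 k x‖
        = ‖q x * (lam ^ k / ((2*k).factorial : ℂ) * φ (2*k) x)
            + lam ^ k / ((2*k).factorial : ℂ)
              * (((2*k : ℕ) : ℂ) * (((2*k : ℕ) : ℂ) - 1) * φ (2*k-2) x)‖ := by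
          rw [hP2]; ring_nf
      _ ≤ ‖q x * (lam ^ k / ((2*k).factorial : ℂ) * φ (2*k) x)‖
            + ‖lam ^ k / ((2*k).factorial : ℂ)
              * (((2*k : ℕ) : ℂ) * (((2*k : ℕ) : ℂ) - 1) * φ (2*k-2) x)‖ :=
          norm_add_le _ _
      _ ≤ Cq * (Cf * (t^(2*k) / (((2*k).factorial : ℕ) : ℝ)))
            + (6*Cf) * ((2*t)^(2*k) / (((2*k).factorial : ℕ) : ℝ)) := add_le_add h1 h2
      _ ≤ (Cq*Cf + 6*Cf) * ((2*t)^(2*k) / (((2*k).factorial : ℕ) : ℝ)) := by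
          have : Cq * (Cf * (t^(2*k) / (((2*k).factorial : ℕ) : ℝ)))
              ≤ Cq*Cf * ((2*t)^(2*k) / (((2*k).factorial : ℕ) : ℝ)) := by
            rw [mul_assoc]
            refine mul_le_mul_of_nonneg_left ?_ hCq0
            refine mul_le_mul_of_nonneg_left ?_ hCf0
            gcongr
          linarith
  -- uniform convergence of the derivative series
  set v : ℝ → ℂ := fun x => ∑' k : ℕ, lam ^ k / ((2*k).factorial : ℂ) * P1 k x with hv
  set w : ℝ → ℂ := fun x => ∑' k : ℕ, lam ^ k / ((2*k).factorial : ℂ) * P2 k x with hw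
  have hTU1 : TendstoUniformlyOn
      (fun N x => ∑ k ∈ range N, lam ^ k / ((2*k).factorial : ℂ) * P1 k x)
      v atTop (Set.Ioo a b) :=
    tendstoUniformlyOn_tsum_nat (aux_summable (2*(Cf' + Ci)) (2*t))
      (fun k x hx => B1 k x (hIoo hx))
  have hTU2 : TendstoUniformlyOn
      (fun N x => ∑ k ∈ range N, lam ^ k / ((2*k).factorial : ℂ) * P2 k x)
      w atTop (Set.Ioo a b) :=
    tendstoUniformlyOn_tsum_nat (aux_summable (Cq*Cf + 6*Cf) (2*t))
      (fun k x hx => B2 k x (hIoo hx))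
  -- u₁ has derivative v on (a,b)
  have hu1d : ∀ x ∈ Set.Ioo a b, HasDerivAt u₁ (v x) x := by
    intro x hx
    refine hasDerivAt_of_tendstoUniformlyOn isOpen_Ioo hTU1
      (Eventually.of_forall fun N y hy => ?_) (fun y hy => hTU0.tendsto_at (hIoo hy)) hx
    exact HasDerivAt.fun_sum fun k _ =>
      HasDerivAt.const_mul (lam ^ k / ((2*k).factorial : ℂ)) (hder1 k y hy)
  -- v has derivative w on (a,b)
  have hvd : ∀ x ∈ Set.Ioo a b, HasDerivAt v (w x) x := by
    intro x hx
    refine hasDerivAt_of_tendstoUniformlyOn isOpen_Ioo hTU2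
      (Eventually.of_forall fun N y hy => ?_) (fun y hy => hTU1.tendsto_at hy) hx
    exact HasDerivAt.fun_sum fun k _ =>
      HasDerivAt.const_mul (lam ^ k / ((2*k).factorial : ℂ)) (hder2 k y hy)
  -- conclusion
  intro x hx
  have hxI := hIoo hx
  have hEq : Set.EqOn (deriv u₁) v (Set.Ioo a b) := fun y hy => (hu1d y hy).deriv
  have hev : deriv u₁ =ᶠ[nhds x] v :=
    Filter.eventuallyEq_of_mem (isOpen_Ioo.mem_nhds hx) hEq
  have hdd : deriv (deriv u₁) x = w x := by
    rw [hev.deriv_eq]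
    exact (hvd x hx).deriv
  -- summability of pieces at x
  have S0x : Summable (fun k : ℕ => lam ^ k / ((2*k).factorial : ℂ) * φ (2*k) x) :=
    Summable.of_norm_bounded (aux_summable Cf t) (fun k => B0 k x hxI)
  have SB : Summable (fun k : ℕ => lam ^ k / ((2*k).factorial : ℂ)
      * (((2*k : ℕ) : ℂ) * (((2*k : ℕ) : ℂ) - 1) * φ (2*k-2) x)) :=
    Summable.of_norm_bounded (aux_summable (6*Cf) (2*t)) (fun k => B2b k x hxI)
  have SA : Summable (fun k : ℕ => q x * (lam ^ k / ((2*k).factorial : ℂ) * φ (2*k) x)) :=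
    S0x.mul_left (q x)
  -- compute w x
  have hwx : w x = q x * u₁ x + lam * u₁ x := by
    have h1 : (fun k : ℕ => lam ^ k / ((2*k).factorial : ℂ) * P2 k x)
        = fun k : ℕ => q x * (lam ^ k / ((2*k).factorial : ℂ) * φ (2*k) x)
          + lam ^ k / ((2*k).factorial : ℂ)
            * (((2*k : ℕ) : ℂ) * (((2*k : ℕ) : ℂ) - 1) * φ (2*k-2) x) := by
      funext k
      rw [hP2]
      ring
    rw [hw]
    show (∑' k : ℕ, lam ^ k / ((2*k).factorial : ℂ) * P2 k x) = _
    rw [h1, Summable.tsum_add SA SB, tsum_mul_left]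
    congr 1
    · rw [← hu₁ x]
    · -- shifted series
      have h0 : lam ^ 0 / ((2*0).factorial : ℂ)
          * (((2*0 : ℕ) : ℂ) * (((2*0 : ℕ) : ℂ) - 1) * φ (2*0-2) x) = 0 := by
        norm_num
      rw [Summable.tsum_eq_zero_add SB, h0, zero_add]
      have h2 : ∀ k : ℕ, lam ^ (k+1) / ((2*(k+1)).factorial : ℂ)
          * (((2*(k+1) : ℕ) : ℂ) * (((2*(k+1) : ℕ) : ℂ) - 1) * φ (2*(k+1)-2) x)
          = lam * (lam ^ k / ((2*k).factorial : ℂ) * φ (2*k) x) := by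
        intro k
        have e3 : 2*(k+1)-2 = 2*k := by omega
        have e4 : (2*(k+1):ℕ) = 2*k+2 := by ring
        rw [e3, e4]
        have hfac : ((2*k+2).factorial : ℂ)
            = ((2*k+2 : ℕ) : ℂ) * (((2*k+1 : ℕ) : ℂ) * (((2*k).factorial : ℕ) : ℂ)) := by
          have h5 : (2*k+2).factorial = (2*k+2) * ((2*k+1) * (2*k).factorial) := by
            rw [show (2*k+2) = (2*k+1)+1 from rfl, Nat.factorial_succ, Nat.factorial_succ]
          rw [h5]
          push_cast
          ring
        have hsub : ((2*k+2:ℕ):ℂ) - 1 = ((2*k+1:ℕ):ℂ) := by push_cast; ring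
        rw [hfac, hsub]
        have hne1 : ((2*k+2 : ℕ) : ℂ) ≠ 0 := Nat.cast_ne_zero.mpr (by omega)
        have hne2 : ((2*k+1 : ℕ) : ℂ) ≠ 0 := Nat.cast_ne_zero.mpr (by omega)
        have hne3 : (((2*k).factorial : ℕ) : ℂ) ≠ 0 :=
          Nat.cast_ne_zero.mpr (Nat.factorial_ne_zero _)
        calc lam^(k+1) / (((2*k+2 : ℕ) : ℂ) * (((2*k+1 : ℕ) : ℂ) * (((2*k).factorial : ℕ) : ℂ)))
              * (((2*k+2 : ℕ) : ℂ) * ((2*k+1 : ℕ) : ℂ) * φ (2*k) x)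
            = (lam^(k+1) * (((2*k+2 : ℕ) : ℂ) * ((2*k+1 : ℕ) : ℂ) * φ (2*k) x))
              / (((2*k+2 : ℕ) : ℂ) * (((2*k+1 : ℕ) : ℂ) * (((2*k).factorial : ℕ) : ℂ))) :=
            div_mul_eq_mul_div _ _ _
          _ = (lam * (lam^k * φ (2*k) x)) / (((2*k).factorial : ℕ) : ℂ) := by
            rw [div_eq_div_iff (mul_ne_zero hne1 (mul_ne_zero hne2 hne3)) hne3]
            ring
          _ = lam * (lam^k / (((2*k).factorial : ℕ) : ℂ) * φ (2*k) x) := by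
            rw [div_mul_eq_mul_div, mul_div_assoc]
      rw [tsum_congr h2, tsum_mul_left, ← hu₁ x]
  rw [hdd, hwx]
  ring
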